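/- Let m ∈ ℝ, m ≠ 0, and let f, 𝔣 : Γ₊ → ℝ be symmetric, differentiable, positively homogeneous of degree m, and elliptic on Γ₊ (all first partial derivatives of both f and 𝔣 are positive on Γ₊). If f is concave and 𝔣 is convex on Γ₊, then for every λ ∈ Γ₊: m · Σⱼ ( f(λ) · ∂𝔣/∂λⱼ(λ) − 𝔣(λ) · ∂f/∂λⱼ(λ) ) ≤ 0. -/

import Mathlib

open Set

/-- Supporting hyperplane inequality for a convex function differentiable at a point. -/
lemma aux_support_convex {E : Type*} [NormedAddCommGroup E] [NormedSpace ℝ E]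
    {s : Set E} {h : E → ℝ} (hs : ConvexOn ℝ s h) {x y : E}
    (hx : x ∈ s) (hy : y ∈ s) (hd : DifferentiableAt ℝ h x) :
    fderiv ℝ h x (y - x) ≤ h y - h x := by
  have hA : ∀ t : ℝ, t ∈ Set.Icc (0:ℝ) 1 → x + t • (y - x) ∈ s := by
    intro t ht
    have hmem := hs.1 hx hy (by linarith [ht.2] : (0:ℝ) ≤ 1 - t) ht.1 (by ring)
    have : (1 - t) • x + t • y = x + t • (y - x) := by module
    rwa [this] at hmem
  set φ : ℝ → ℝ := fun t => h (x + t • (y - x)) with hφ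
  have hφc : ConvexOn ℝ (Set.Icc (0:ℝ) 1) φ := by
    refine ⟨convex_Icc 0 1, ?_⟩
    intro p hp q hq a b ha hb hab
    have h1 : x + (a • p + b • q) • (y - x)
        = a • (x + p • (y - x)) + b • (x + q • (y - x)) := by
      simp only [smul_eq_mul]
      match_scalars <;> linarith
    simp only [φ, h1]
    exact hs.2 (hA p hp) (hA q hq) ha hb hab
  have hc : HasDerivAt (fun t : ℝ => x + t • (y - x)) (y - x) 0 := by
    simpa using ((hasDerivAt_id (0:ℝ)).smul_const (y - x)).const_add x
  have hd0 : HasDerivAt φ (fderiv ℝ h x (y - x)) 0 := by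
    have hx0 : x + (0:ℝ) • (y - x) = x := by simp
    have := (hx0 ▸ hd.hasFDerivAt).comp_hasDerivAt 0 hc
    simpa [φ, Function.comp_def] using this
  have := hφc.le_slope_of_hasDerivAt (by constructor <;> norm_num)
    (by constructor <;> norm_num) zero_lt_one hd0
  rw [slope_def_field] at this
  simpa [φ] using this

/-- Supporting hyperplane inequality for a concave function. -/
lemma aux_support_concave {E : Type*} [NormedAddCommGroup E] [NormedSpace ℝ E]
    {s : Set E} {h : E → ℝ} (hs : ConcaveOn ℝ s h) {x y : E}
    (hx : x ∈ s) (hy : y ∈ s) (hd : DifferentiableAt ℝ h x) :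
    h y - h x ≤ fderiv ℝ h x (y - x) := by
  have := aux_support_convex hs.neg hx hy hd.neg
  have hneg : fderiv ℝ (fun z => -h z) x = -fderiv ℝ h x := fderiv_neg
  rw [show (-h) = (fun z => -h z) from rfl] at this
  rw [hneg] at this
  simp only [ContinuousLinearMap.neg_apply, Pi.neg_apply] at this
  linarith

/-- Euler's identity for positively homogeneous functions. -/
lemma aux_euler {n : ℕ} {m : ℝ} {f : (Fin n → ℝ) → ℝ} {Γ : Set (Fin n → ℝ)}
    (hΓ : Γ = {x : Fin n → ℝ | ∀ i, 0 < x i})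
    (hd : ∀ x ∈ Γ, DifferentiableAt ℝ f x)
    (hhom : ∀ t : ℝ, 0 < t → ∀ x ∈ Γ, f (t • x) = t ^ m * f x)
    {x : Fin n → ℝ} (hx : x ∈ Γ) : fderiv ℝ f x x = m * f x := by
  have hc : HasDerivAt (fun t : ℝ => t • x) x 1 := by
    simpa using (hasDerivAt_id (1:ℝ)).smul_const x
  have hx1 : (1:ℝ) • x = x := one_smul _ _
  have h1 : HasDerivAt (fun t : ℝ => f (t • x)) (fderiv ℝ f x x) 1 := by
    have := (hx1 ▸ (hd x hx).hasFDerivAt).comp_hasDerivAt 1 hc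
    simpa [Function.comp_def] using this
  have heq : (fun t : ℝ => t ^ m * f x) =ᶠ[nhds 1] (fun t : ℝ => f (t • x)) := by
    filter_upwards [eventually_gt_nhds zero_lt_one] with t ht
    have htx : t • x ∈ Γ := by
      rw [hΓ] at hx ⊢
      intro i
      exact mul_pos ht (hx i)
    exact (hhom t ht x hx).symm
  have h2 : HasDerivAt (fun t : ℝ => t ^ m * f x) (m * f x) 1 := by
    have := (Real.hasDerivAt_rpow_const (x := (1:ℝ)) (p := m) (Or.inl one_ne_zero)).mul_const (f x)
    simpa using this
  have h2' : HasDerivAt (fun t : ℝ => f (t • x)) (m * f x) 1 := h2.congr_of_eventuallyEq heq.symm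
  exact h1.unique h2'

/-- Partial derivatives of a symmetric function at a constant point are equal. -/
lemma aux_grad_symm {n : ℕ} {f : (Fin n → ℝ) → ℝ} {Γ : Set (Fin n → ℝ)}
    (hopen : IsOpen Γ)
    (hsym : ∀ (σ : Equiv.Perm (Fin n)), ∀ x ∈ Γ, f (x ∘ σ) = f x)
    (hd : ∀ x ∈ Γ, DifferentiableAt ℝ f x)
    {c : ℝ} (hy : (fun _ : Fin n => c) ∈ Γ) (i j : Fin n) :
    fderiv ℝ f (fun _ => c) (Pi.single i 1) = fderiv ℝ f (fun _ => c) (Pi.single j 1) := by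
  set y : Fin n → ℝ := fun _ => c with hydef
  set σ : Equiv.Perm (Fin n) := Equiv.swap i j with hσ
  set L : (Fin n → ℝ) →L[ℝ] (Fin n → ℝ) :=
    LinearMap.toContinuousLinearMap (LinearMap.funLeft ℝ ℝ σ) with hLdef
  have hL : ∀ z, L z = z ∘ σ := fun z => rfl
  have hLy : L y = y := by funext k; rfl
  have heq : (fun z => f (L z)) =ᶠ[nhds y] f := by
    filter_upwards [hopen.mem_nhds hy] with z hz
    exact hsym σ z hz
  have hdy := hd y hy
  have hfd : fderiv ℝ (f ∘ L) y = (fderiv ℝ f (L y)).comp (fderiv ℝ (fun z => L z) y) :=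
    fderiv_comp y (hLy ▸ hdy) L.differentiableAt
  rw [L.fderiv] at hfd
  have hkey : (fderiv ℝ f y).comp L = fderiv ℝ f y := by
    rw [← hLy, ← hfd]
    exact heq.fderiv_eq
  have happ := DFunLike.congr_fun hkey (Pi.single i (1:ℝ))
  have hsingle : L (Pi.single i (1:ℝ)) = Pi.single j 1 := by
    rw [hL]
    funext k
    have hiff : σ k = i ↔ k = j := by
      rw [Equiv.apply_eq_iff_eq_symm_apply]
      simp [hσ]
    simp only [Function.comp_apply, Pi.single_apply]
    by_cases hk : k = j
    · subst hk; simp [hiff.mpr rfl]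
    · have hne : ¬ (σ k = i) := fun h => hk (hiff.mp h)
      simp [hne, hk]
  rw [ContinuousLinearMap.comp_apply, hsingle] at happ
  exact happ.symm

/-- second inequality of Lemma 2.3, concave/convex case. -/
theorem lemma23_second_ineq_concave_convex (n : ℕ) (m : ℝ) (hm : m ≠ 0)
    (f g : (Fin n → ℝ) → ℝ)
    (Γ : Set (Fin n → ℝ)) (hΓ : Γ = {x : Fin n → ℝ | ∀ i, 0 < x i})
    (hsymf : ∀ (σ : Equiv.Perm (Fin n)), ∀ x ∈ Γ, f (x ∘ σ) = f x)
    (hsymg : ∀ (σ : Equiv.Perm (Fin n)), ∀ x ∈ Γ, g (x ∘ σ) = g x)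
    (hdf : ∀ x ∈ Γ, DifferentiableAt ℝ f x)
    (hdg : ∀ x ∈ Γ, DifferentiableAt ℝ g x)
    (hhomf : ∀ t : ℝ, 0 < t → ∀ x ∈ Γ, f (t • x) = t ^ m * f x)
    (hhomg : ∀ t : ℝ, 0 < t → ∀ x ∈ Γ, g (t • x) = t ^ m * g x)
    (hellf : ∀ x ∈ Γ, ∀ i, 0 < fderiv ℝ f x (Pi.single i 1))
    (hellg : ∀ x ∈ Γ, ∀ i, 0 < fderiv ℝ g x (Pi.single i 1))
    (hconcf : ConcaveOn ℝ Γ f) (hconvg : ConvexOn ℝ Γ g) :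
    ∀ x ∈ Γ,
      m * ∑ j, (f x * fderiv ℝ g x (Pi.single j 1)
              - g x * fderiv ℝ f x (Pi.single j 1)) ≤ 0 := by
  intro x hx
  rcases Nat.eq_zero_or_pos n with hn | hn
  · subst hn
    simp
  -- basic facts
  have hxpos : ∀ i, 0 < x i := by rw [hΓ] at hx; exact hx
  have hopen : IsOpen Γ := by
    rw [hΓ]
    have : {x : Fin n → ℝ | ∀ i, 0 < x i}
        = ⋂ i, (fun x : Fin n → ℝ => x i) ⁻¹' Set.Ioi 0 := by
      ext z; simp [Set.mem_iInter, Set.mem_Ioi]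
    rw [this]
    exact isOpen_iInter_of_finite fun i => (continuous_apply i).isOpen_preimage _ isOpen_Ioi
  -- the constant vector y with value c, the mean of the coordinates of x
  set c : ℝ := (∑ i, x i) / n with hc
  have hsumpos : 0 < ∑ i, x i :=
    Finset.sum_pos (fun i _ => hxpos i) (Finset.univ_nonempty_iff.mpr ⟨⟨0, hn⟩⟩)
  have hnpos : (0:ℝ) < n := by exact_mod_cast hn
  have hcpos : 0 < c := div_pos hsumpos hnpos
  set y : Fin n → ℝ := fun _ => c with hy
  have hyΓ : y ∈ Γ := by rw [hΓ]; intro i; exact hcpos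
  -- decomposition lemmas
  have hdecomp : ∀ z : Fin n → ℝ, z = ∑ i, z i • (Pi.single i (1:ℝ) : Fin n → ℝ) := by
    intro z
    funext k
    simp [Finset.sum_apply, Pi.single_apply]
  -- Euler identities
  have heulf : fderiv ℝ f x x = m * f x := aux_euler hΓ hdf hhomf hx
  have heulg : fderiv ℝ g x x = m * g x := aux_euler hΓ hdg hhomg hx
  -- positivity of m * f x, m * g x
  have hfxx : ∀ (F : (Fin n → ℝ) → ℝ) (z w : Fin n → ℝ),
      fderiv ℝ F z w = ∑ i, w i * fderiv ℝ F z (Pi.single i 1) := by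
    intro F z w
    conv_lhs => rw [hdecomp w]
    rw [map_sum]
    simp [smul_eq_mul]
  have hmf : 0 < m * f x := by
    rw [← heulf, hfxx f x x]
    exact Finset.sum_pos (fun i _ => mul_pos (hxpos i) (hellf x hx i))
      (Finset.univ_nonempty_iff.mpr ⟨⟨0, hn⟩⟩)
  have hmg : 0 < m * g x := by
    rw [← heulg, hfxx g x x]
    exact Finset.sum_pos (fun i _ => mul_pos (hxpos i) (hellg x hx i))
      (Finset.univ_nonempty_iff.mpr ⟨⟨0, hn⟩⟩)
  -- the gradient of f (resp. g) at the constant point y kills x - y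
  have hxy : ∑ i, (x - y) i = 0 := by
    have : (n:ℝ) * c = ∑ i, x i := by
      rw [hc]; field_simp
    simp only [Pi.sub_apply, hy, Finset.sum_sub_distrib, Finset.sum_const,
      Finset.card_univ, Fintype.card_fin, nsmul_eq_mul]
    linarith
  have hkill : ∀ (F : (Fin n → ℝ) → ℝ),
      (∀ (σ : Equiv.Perm (Fin n)), ∀ z ∈ Γ, F (z ∘ σ) = F z) →
      (∀ z ∈ Γ, DifferentiableAt ℝ F z) →
      fderiv ℝ F y (x - y) = 0 := by
    intro F hsym hd
    rw [hfxx F y (x - y)]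
    set d : ℝ := fderiv ℝ F y (Pi.single ⟨0, hn⟩ 1) with hd0
    have hall : ∀ i, fderiv ℝ F y (Pi.single i 1) = d :=
      fun i => aux_grad_symm hopen hsym hd hyΓ i ⟨0, hn⟩
    calc ∑ i, (x - y) i * fderiv ℝ F y (Pi.single i 1)
        = ∑ i, (x - y) i * d := by
          exact Finset.sum_congr rfl fun i _ => by rw [hall i]
      _ = (∑ i, (x - y) i) * d := by rw [Finset.sum_mul]
      _ = 0 := by rw [hxy, zero_mul]
  -- Jensen-type comparisons: f x ≤ f y and g y ≤ g x
  have hfy : f x ≤ f y := by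
    have := aux_support_concave hconcf hyΓ hx (hdf y hyΓ)
    rw [hkill f hsymf hdf] at this
    linarith
  have hgy : g y ≤ g x := by
    have := aux_support_convex hconvg hyΓ hx (hdg y hyΓ)
    rw [hkill g hsymg hdg] at this
    linarith
  -- supporting hyperplane at x in direction y
  have hfd1 : fderiv ℝ f x (y - x) = c * fderiv ℝ f x (fun _ => 1) - m * f x := by
    rw [map_sub, heulf]
    congr 1
    have : y = c • (fun _ : Fin n => (1:ℝ)) := by funext k; simp [hy]
    rw [this, map_smul, smul_eq_mul]
  have hgd1 : fderiv ℝ g x (y - x) = c * fderiv ℝ g x (fun _ => 1) - m * g x := by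
    rw [map_sub, heulg]
    congr 1
    have : y = c • (fun _ : Fin n => (1:ℝ)) := by funext k; simp [hy]
    rw [this, map_smul, smul_eq_mul]
  have hFsupp : f y - f x ≤ c * fderiv ℝ f x (fun _ => 1) - m * f x := by
    have := aux_support_concave hconcf hx hyΓ (hdf x hx)
    rwa [hfd1] at this
  have hGsupp : c * fderiv ℝ g x (fun _ => 1) - m * g x ≤ g y - g x := by
    have := aux_support_convex hconvg hx hyΓ (hdg x hx)
    rwa [hgd1] at this
  -- collect: c * Df𝟙 ≥ m f x, c * Dg𝟙 ≤ m g x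
  have hDf : m * f x ≤ c * fderiv ℝ f x (fun _ => 1) := by linarith
  have hDg : c * fderiv ℝ g x (fun _ => 1) ≤ m * g x := by linarith
  -- rewrite the goal sum
  have hones : (∑ j, Pi.single j (1:ℝ)) = fun _ : Fin n => (1:ℝ) := by
    funext k
    simp [Finset.sum_apply, Pi.single_apply]
  have hsf : ∑ j, fderiv ℝ f x (Pi.single j 1) = fderiv ℝ f x (fun _ => 1) := by
    rw [← hones]; exact (map_sum _ _ _).symm
  have hsg : ∑ j, fderiv ℝ g x (Pi.single j 1) = fderiv ℝ g x (fun _ => 1) := by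
    rw [← hones]; exact (map_sum _ _ _).symm
  have hgoal : m * ∑ j, (f x * fderiv ℝ g x (Pi.single j 1)
      - g x * fderiv ℝ f x (Pi.single j 1))
      = (m * f x) * fderiv ℝ g x (fun _ => 1) - (m * g x) * fderiv ℝ f x (fun _ => 1) := by
    rw [Finset.sum_sub_distrib, ← Finset.mul_sum, ← Finset.mul_sum, hsf, hsg]
    ring
  rw [hgoal]
  nlinarith [mul_le_mul_of_nonneg_left hDg hmf.le, mul_le_mul_of_nonneg_left hDf hmg.le]
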